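/- Let i > 1 be an integer. Then the triple integral ∫₀¹ ∫₀¹ ∫₀¹ 1/((x₁·x₂·x₃)^i + q) dx₃ dx₂ dx₁ satisfies ∫₀¹ ∫₀¹ ∫₀¹ 1/((x₁·x₂·x₃)^i + q) dx₃ dx₂ dx₁ = Θ(q^(−1 + 1/i)·(log q)²) as q → 0⁺. -/

import Mathlib

open MeasureTheory Filter Topology intervalIntegral Real

/-- `I = Θ(R)` as `q → 0⁺`: there exist constants `0 < c ≤ C` and `q₀ > 0` such that
`c·R q ≤ I q ≤ C·R q` for all `0 < q < q₀`. -/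
def IsThetaAtZero (I R : ℝ → ℝ) : Prop :=
  ∃ c C q₀ : ℝ, 0 < c ∧ c ≤ C ∧ 0 < q₀ ∧
    ∀ q : ℝ, 0 < q → q < q₀ → c * R q ≤ I q ∧ I q ≤ C * R q

namespace ThetaAux

noncomputable def psi (i : ℕ) (q : ℝ) (a : ℝ) : ℝ :=
  ∫ x in (0:ℝ)..1, 1/((max 0 a * max 0 x)^i + q)

noncomputable def Phi (i : ℕ) (q : ℝ) (a : ℝ) : ℝ :=
  ∫ x in (0:ℝ)..1, psi i q (a * x)

lemma integrand_integrable (i : ℕ) (q a : ℝ) (hq : 0 < q) (ha : 0 ≤ a) (c d : ℝ)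
    (hc : 0 ≤ c) (hd : 0 ≤ d) :
    IntervalIntegrable (fun x => 1/((a*x)^i + q)) volume c d := by
  apply ContinuousOn.intervalIntegrable
  apply ContinuousOn.div continuousOn_const (by fun_prop)
  intro x hx
  have hx0 : 0 ≤ x := by
    rcases Set.mem_uIcc.mp hx with h | h
    · exact le_trans hc h.1
    · exact le_trans hd h.1
  have : 0 ≤ (a*x)^i := pow_nonneg (mul_nonneg ha hx0) i
  positivity

lemma inner_upper (i : ℕ) (hi : 1 < i) (q a : ℝ) (hq : 0 < q)
    (ha : q ^ (1/(i:ℝ)) ≤ a) (ha1 : a ≤ 1) :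
    ∫ x in (0:ℝ)..1, 1/((a*x)^i + q) ≤ 2 * q ^ (1/(i:ℝ)) / (a * q) := by
  set t := q ^ (1/(i:ℝ)) with htdef
  have ht0 : 0 < t := rpow_pos_of_pos hq _
  have ha0 : 0 < a := lt_of_lt_of_le ht0 ha
  have hti : t ^ (i:ℝ) = q := by
    rw [htdef, ← Real.rpow_mul hq.le, one_div, inv_mul_cancel₀ (by positivity), Real.rpow_one]
  set m := t / a with hmdef
  have hm0 : 0 < m := div_pos ht0 ha0
  have hm1 : m ≤ 1 := (div_le_one ha0).mpr ha
  have hint : ∀ c d : ℝ, 0 ≤ c → 0 ≤ d →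
      IntervalIntegrable (fun x => 1/((a*x)^i + q)) volume c d :=
    fun c d hc hd => integrand_integrable i q a hq ha0.le c d hc hd
  have hsplit : (∫ x in (0:ℝ)..1, 1/((a*x)^i + q)) =
      (∫ x in (0:ℝ)..m, 1/((a*x)^i + q)) + ∫ x in m..1, 1/((a*x)^i + q) :=
    (integral_add_adjacent_intervals (hint 0 m le_rfl hm0.le) (hint m 1 hm0.le zero_le_one)).symm
  have h1 : (∫ x in (0:ℝ)..m, 1/((a*x)^i + q)) ≤ m / q := by
    have : (∫ x in (0:ℝ)..m, 1/((a*x)^i + q)) ≤ ∫ _ in (0:ℝ)..m, 1/q := by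
      apply integral_mono_on hm0.le (hint 0 m le_rfl hm0.le)
        (intervalIntegrable_const)
      intro x hx
      have : 0 ≤ (a*x)^i := pow_nonneg (mul_nonneg ha0.le hx.1) i
      apply one_div_le_one_div_of_le hq (by linarith)
    simpa [div_eq_mul_inv, mul_comm] using this
  have h2 : (∫ x in m..1, 1/((a*x)^i + q)) ≤ t / (a * q) := by
    have key : (∫ x in m..1, 1/((a*x)^i + q)) ≤ ∫ x in m..1, a^(-(i:ℝ)) * x^(-(i:ℝ)) := by
      apply integral_mono_on hm1 (hint m 1 hm0.le zero_le_one)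
      · apply ContinuousOn.intervalIntegrable
        apply ContinuousOn.mul continuousOn_const
        apply ContinuousOn.rpow_const continuousOn_id
        intro x hx
        rw [Set.uIcc_of_le hm1] at hx
        exact Or.inl (ne_of_gt (lt_of_lt_of_le hm0 hx.1))
      intro x hx
      have hx0 : 0 < x := lt_of_lt_of_le hm0 hx.1
      have hax : 0 < a * x := mul_pos ha0 hx0
      have heq : a^(-(i:ℝ)) * x^(-(i:ℝ)) = ((a*x)^i)⁻¹ := by
        rw [← Real.mul_rpow ha0.le hx0.le, Real.rpow_neg hax.le, Real.rpow_natCast]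
      rw [heq]
      rw [one_div]
      apply inv_anti₀ (by positivity) (by linarith [pow_pos hax i])
    have hcomp : (∫ x in m..1, a^(-(i:ℝ)) * x^(-(i:ℝ))) =
        a^(-(i:ℝ)) * ((1 - m ^ (-(i:ℝ)+1)) / (-(i:ℝ)+1)) := by
      rw [intervalIntegral.integral_const_mul, integral_rpow]
      · norm_num
      · right
        constructor
        · intro h
          have h1 : (i:ℝ) = 1 := by
            have := h
            simp only [neg_eq_iff_eq_neg] at this
            linarith [this]
          have : i = 1 := by exact_mod_cast h1
          omega
        · rw [Set.uIcc_of_le hm1]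
          intro h
          exact absurd h.1 (by linarith)
    have hane : a ^ (-(i:ℝ)) ≠ 0 := ne_of_gt (rpow_pos_of_pos ha0 _)
    have e1 : t ^ (-(i:ℝ)+1) = q⁻¹ * t := by
      rw [Real.rpow_add ht0, Real.rpow_one, Real.rpow_neg ht0.le, hti]
    have e2 : a ^ (-(i:ℝ)+1) = a^(-(i:ℝ)) * a := by
      rw [Real.rpow_add ha0, Real.rpow_one]
    have hM : a^(-(i:ℝ)) * m ^ (-(i:ℝ)+1) = t/(a*q) := by
      rw [hmdef, Real.div_rpow ht0.le ha0.le, e1, e2]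
      field_simp
    have hMge : 1 ≤ m ^ (-(i:ℝ)+1) :=
      Real.one_le_rpow_of_pos_of_le_one_of_nonpos hm0 hm1
        (by
          have h2 : (2:ℝ) ≤ (i:ℝ) := by exact_mod_cast hi
          linarith)
    set M := m ^ (-(i:ℝ)+1) with hMdef
    have hi2 : (2:ℝ) ≤ (i:ℝ) := by exact_mod_cast hi
    have hfrac : (1 - M)/(-(i:ℝ)+1) ≤ M := by
      have heqf : (1 - M)/(-(i:ℝ)+1) = (M-1)/((i:ℝ)-1) := by
        rw [div_eq_div_iff (by linarith) (by linarith)]; ring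
      rw [heqf]
      have := div_le_self (by linarith : (0:ℝ) ≤ M - 1) (by linarith : (1:ℝ) ≤ (i:ℝ)-1)
      linarith
    calc (∫ x in m..1, 1/((a*x)^i + q)) ≤ a^(-(i:ℝ)) * ((1 - M)/(-(i:ℝ)+1)) := by
          rw [← hcomp]; exact key
      _ ≤ a^(-(i:ℝ)) * M := by
          apply mul_le_mul_of_nonneg_left hfrac (le_of_lt (rpow_pos_of_pos ha0 _))
      _ = t/(a*q) := hM
  calc (∫ x in (0:ℝ)..1, 1/((a*x)^i + q)) = _ + _ := hsplit
    _ ≤ m/q + t/(a*q) := add_le_add h1 h2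
    _ = 2 * t / (a*q) := by rw [hmdef]; field_simp; ring

lemma inner_lower (i : ℕ) (hi : 1 < i) (q a : ℝ) (hq : 0 < q)
    (ha : q ^ (1/(i:ℝ)) ≤ a) (ha1 : a ≤ 1) :
    q ^ (1/(i:ℝ)) / (2 * a * q) ≤ ∫ x in (0:ℝ)..1, 1/((a*x)^i + q) := by
  set t := q ^ (1/(i:ℝ)) with htdef
  have ht0 : 0 < t := rpow_pos_of_pos hq _
  have ha0 : 0 < a := lt_of_lt_of_le ht0 ha
  have hti : t ^ i = q := by
    rw [htdef, ← Real.rpow_natCast (q ^ (1/(i:ℝ))) i, ← Real.rpow_mul hq.le]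
    rw [one_div, inv_mul_cancel₀ (by positivity), Real.rpow_one]
  set b := t / a with hbdef
  have hb0 : 0 < b := div_pos ht0 ha0
  have hb1 : b ≤ 1 := (div_le_one ha0).mpr ha
  have hint : ∀ c d : ℝ, 0 ≤ c → 0 ≤ d →
      IntervalIntegrable (fun x => 1/((a*x)^i + q)) volume c d :=
    fun c d hc hd => integrand_integrable i q a hq ha0.le c d hc hd
  have hsplit : (∫ x in (0:ℝ)..1, 1/((a*x)^i + q)) =
      (∫ x in (0:ℝ)..b, 1/((a*x)^i + q)) + ∫ x in b..1, 1/((a*x)^i + q) :=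
    (integral_add_adjacent_intervals (hint 0 b le_rfl hb0.le) (hint b 1 hb0.le zero_le_one)).symm
  have h2 : 0 ≤ ∫ x in b..1, 1/((a*x)^i + q) := by
    apply integral_nonneg hb1
    intro x hx
    have : 0 ≤ (a*x)^i := pow_nonneg (mul_nonneg ha0.le (le_trans hb0.le hx.1)) i
    positivity
  have h1 : b / (2*q) ≤ ∫ x in (0:ℝ)..b, 1/((a*x)^i + q) := by
    have : (∫ _ in (0:ℝ)..b, 1/(2*q)) ≤ ∫ x in (0:ℝ)..b, 1/((a*x)^i + q) := by
      apply integral_mono_on hb0.le intervalIntegrable_const (hint 0 b le_rfl hb0.le)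
      intro x hx
      have hax : a * x ≤ t := by
        calc a * x ≤ a * b := by nlinarith [hx.2]
          _ = t := by rw [hbdef]; field_simp
      have hax0 : 0 ≤ a * x := mul_nonneg ha0.le hx.1
      have hpow : (a*x)^i ≤ q := by
        calc (a*x)^i ≤ t^i := pow_le_pow_left₀ hax0 hax i
          _ = q := hti
      apply one_div_le_one_div_of_le (by positivity) (by linarith)
    calc b/(2*q) = ∫ _ in (0:ℝ)..b, 1/(2*q) := by
          simp [div_eq_mul_inv, mul_comm]
          ring
      _ ≤ _ := this
  calc t/(2*a*q) = b/(2*q) := by rw [hbdef, div_div]; ring_nf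
    _ ≤ (∫ x in (0:ℝ)..b, 1/((a*x)^i + q)) + ∫ x in b..1, 1/((a*x)^i + q) := by linarith
    _ = _ := hsplit.symm


lemma psi_cont (i : ℕ) (q : ℝ) (hq : 0 < q) : Continuous (psi i q) := by
  apply continuous_parametric_intervalIntegral_of_continuous'
  have : Continuous fun p : ℝ × ℝ => 1/((max 0 p.1 * max 0 p.2)^i + q) := by
    apply Continuous.div continuous_const (by fun_prop)
    intro p
    have : 0 ≤ (max 0 p.1 * max 0 p.2)^i := by positivity
    positivity
  exact this

lemma psi_eq_clean (i : ℕ) (q a : ℝ) (ha : 0 ≤ a) :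
    psi i q a = ∫ x in (0:ℝ)..1, 1/((a*x)^i + q) := by
  apply integral_congr
  intro x hx
  rw [Set.uIcc_of_le zero_le_one] at hx
  simp only [max_eq_right ha, max_eq_right hx.1]

lemma psi_nonneg (i : ℕ) (q : ℝ) (hq : 0 < q) (a : ℝ) : 0 ≤ psi i q a := by
  apply intervalIntegral.integral_nonneg zero_le_one
  intro x _
  have : 0 ≤ (max 0 a * max 0 x)^i := by positivity
  positivity

lemma psi_le_inv_q (i : ℕ) (q : ℝ) (hq : 0 < q) (a : ℝ) : psi i q a ≤ 1/q := by
  have : psi i q a ≤ ∫ _ in (0:ℝ)..1, 1/q := by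
    apply integral_mono_on zero_le_one _ intervalIntegrable_const
    · intro x _
      have h0 : 0 ≤ (max 0 a * max 0 x)^i := by positivity
      exact one_div_le_one_div_of_le hq (by linarith)
    · apply ContinuousOn.intervalIntegrable
      apply ContinuousOn.div continuousOn_const (by fun_prop)
      intro x _
      have : 0 ≤ (max 0 a * max 0 x)^i := by positivity
      positivity
  simpa using this

lemma psi_integrable (i : ℕ) (q : ℝ) (hq : 0 < q) (a c d : ℝ) :
    IntervalIntegrable (fun x => psi i q (a * x)) volume c d :=
  (Continuous.intervalIntegrable (by
    exact (psi_cont i q hq).comp (continuous_const.mul continuous_id)) c d)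

lemma psi_upper (i : ℕ) (hi : 1 < i) (q a : ℝ) (hq : 0 < q)
    (ha : q ^ (1/(i:ℝ)) ≤ a) (ha1 : a ≤ 1) :
    psi i q a ≤ 2 * q ^ (1/(i:ℝ)) / (a * q) := by
  have ht0 : 0 < q ^ (1/(i:ℝ)) := rpow_pos_of_pos hq _
  rw [psi_eq_clean i q a (le_trans ht0.le ha)]
  exact inner_upper i hi q a hq ha ha1

lemma psi_lower (i : ℕ) (hi : 1 < i) (q a : ℝ) (hq : 0 < q)
    (ha : q ^ (1/(i:ℝ)) ≤ a) (ha1 : a ≤ 1) :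
    q ^ (1/(i:ℝ)) / (2 * a * q) ≤ psi i q a := by
  have ht0 : 0 < q ^ (1/(i:ℝ)) := rpow_pos_of_pos hq _
  rw [psi_eq_clean i q a (le_trans ht0.le ha)]
  exact inner_lower i hi q a hq ha ha1

lemma Phi_cont (i : ℕ) (q : ℝ) (hq : 0 < q) : Continuous (Phi i q) := by
  apply continuous_parametric_intervalIntegral_of_continuous'
  exact (psi_cont i q hq).comp (continuous_fst.mul continuous_snd)

lemma Phi_nonneg (i : ℕ) (q : ℝ) (hq : 0 < q) (a : ℝ) : 0 ≤ Phi i q a :=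
  integral_nonneg zero_le_one fun x _ => psi_nonneg i q hq _

lemma Phi_le_inv_q (i : ℕ) (q : ℝ) (hq : 0 < q) (a : ℝ) : Phi i q a ≤ 1/q := by
  have : Phi i q a ≤ ∫ _ in (0:ℝ)..1, 1/q := by
    apply integral_mono_on zero_le_one (psi_integrable i q hq a 0 1) intervalIntegrable_const
    intro x _
    exact psi_le_inv_q i q hq _
  simpa using this

lemma Phi_upper (i : ℕ) (hi : 1 < i) (q a : ℝ) (hq : 0 < q)
    (ha : q ^ (1/(i:ℝ)) ≤ a) (ha1 : a ≤ 1) :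
    Phi i q a ≤ q ^ (1/(i:ℝ)) / (a*q) +
      2 * q ^ (1/(i:ℝ)) / (a*q) * (Real.log a - Real.log (q ^ (1/(i:ℝ)))) := by
  set t := q ^ (1/(i:ℝ)) with htdef
  have ht0 : 0 < t := rpow_pos_of_pos hq _
  have ha0 : 0 < a := lt_of_lt_of_le ht0 ha
  set m := t / a with hmdef
  have hm0 : 0 < m := div_pos ht0 ha0
  have hm1 : m ≤ 1 := (div_le_one ha0).mpr ha
  have hsplit : Phi i q a =
      (∫ x in (0:ℝ)..m, psi i q (a*x)) + ∫ x in m..1, psi i q (a*x) :=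
    (integral_add_adjacent_intervals (psi_integrable i q hq a 0 m)
      (psi_integrable i q hq a m 1)).symm
  have h1 : (∫ x in (0:ℝ)..m, psi i q (a*x)) ≤ m / q := by
    have : (∫ x in (0:ℝ)..m, psi i q (a*x)) ≤ ∫ _ in (0:ℝ)..m, 1/q := by
      apply integral_mono_on hm0.le (psi_integrable i q hq a 0 m) intervalIntegrable_const
      intro x _
      exact psi_le_inv_q i q hq _
    simpa [div_eq_mul_inv, mul_comm] using this
  have h2 : (∫ x in m..1, psi i q (a*x)) ≤
      2*t/(a*q) * (Real.log a - Real.log t) := by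
    have hmono : (∫ x in m..1, psi i q (a*x)) ≤ ∫ x in m..1, 2*t/(a*q) * (1/x) := by
      apply integral_mono_on hm1 (psi_integrable i q hq a m 1)
      · apply ContinuousOn.intervalIntegrable
        apply ContinuousOn.mul continuousOn_const
        apply ContinuousOn.div continuousOn_const continuousOn_id
        intro x hx
        rw [Set.uIcc_of_le hm1] at hx
        exact ne_of_gt (lt_of_lt_of_le hm0 hx.1)
      intro x hx
      have hx0 : 0 < x := lt_of_lt_of_le hm0 hx.1
      have haxt : t ≤ a * x := by
        calc t = a * m := by rw [hmdef]; field_simp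
          _ ≤ a * x := by nlinarith [hx.1]
      have hax1 : a * x ≤ 1 := by nlinarith [hx.2]
      calc psi i q (a*x) ≤ 2*t/((a*x)*q) := psi_upper i hi q (a*x) hq haxt hax1
        _ = 2*t/(a*q) * (1/x) := by field_simp
    have hcomp : (∫ x in m..1, 2*t/(a*q) * (1/x)) = 2*t/(a*q) * (Real.log a - Real.log t) := by
      rw [intervalIntegral.integral_const_mul, integral_one_div]
      · rw [one_div, hmdef, inv_div, Real.log_div ha0.ne' ht0.ne']
      · rw [Set.uIcc_of_le hm1]
        intro h
        exact absurd h.1 (by linarith)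
    linarith [hmono, hcomp.le, hcomp.ge]
  have hm : m / q = t/(a*q) := by rw [hmdef, div_div]
  linarith [hsplit.le, hsplit.ge]

lemma Phi_lower (i : ℕ) (hi : 1 < i) (q a s : ℝ) (hq : 0 < q)
    (hs : 0 < s) (hs1 : s ≤ 1) (hst : q ^ (1/(i:ℝ)) ≤ s * s)
    (ha : s ≤ a) (ha1 : a ≤ 1) :
    q ^ (1/(i:ℝ)) / (2*a*q) * (- Real.log s) ≤ Phi i q a := by
  set t := q ^ (1/(i:ℝ)) with htdef
  have ht0 : 0 < t := rpow_pos_of_pos hq _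
  have ha0 : 0 < a := lt_of_lt_of_le hs ha
  have hsplit : Phi i q a =
      (∫ x in (0:ℝ)..s, psi i q (a*x)) + ∫ x in s..1, psi i q (a*x) :=
    (integral_add_adjacent_intervals (psi_integrable i q hq a 0 s)
      (psi_integrable i q hq a s 1)).symm
  have h1 : 0 ≤ ∫ x in (0:ℝ)..s, psi i q (a*x) :=
    integral_nonneg hs.le fun x _ => psi_nonneg i q hq _
  have h2 : t/(2*a*q) * (- Real.log s) ≤ ∫ x in s..1, psi i q (a*x) := by
    have hmono : (∫ x in s..1, t/(2*a*q) * (1/x)) ≤ ∫ x in s..1, psi i q (a*x) := by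
      apply integral_mono_on hs1 _ (psi_integrable i q hq a s 1)
      · intro x hx
        have hx0 : 0 < x := lt_of_lt_of_le hs hx.1
        have haxt : t ≤ a * x := by
          calc t ≤ s * s := hst
            _ ≤ a * x := by nlinarith [hx.1]
        have hax1 : a * x ≤ 1 := by nlinarith [hx.2]
        calc t/(2*a*q) * (1/x) = t/(2*(a*x)*q) := by
              rw [div_mul_div_comm, mul_one]; ring_nf
          _ ≤ psi i q (a*x) := psi_lower i hi q (a*x) hq haxt hax1
      · apply ContinuousOn.intervalIntegrable
        apply ContinuousOn.mul continuousOn_const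
        apply ContinuousOn.div continuousOn_const continuousOn_id
        intro x hx
        rw [Set.uIcc_of_le hs1] at hx
        exact ne_of_gt (lt_of_lt_of_le hs hx.1)
    have hcomp : (∫ x in s..1, t/(2*a*q) * (1/x)) = t/(2*a*q) * (- Real.log s) := by
      rw [intervalIntegral.integral_const_mul, integral_one_div]
      · rw [one_div, Real.log_inv]
      · rw [Set.uIcc_of_le hs1]
        intro h
        exact absurd h.1 (by linarith)
    linarith [hcomp.le, hcomp.ge]
  linarith [hsplit.le, hsplit.ge]


lemma log_sq_integral (t : ℝ) (ht : 0 < t) (ht1 : t ≤ 1) :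
    ∫ x in t..1, (Real.log x - Real.log t) * x⁻¹ = (Real.log t)^2/2 := by
  have hderiv : ∀ x ∈ Set.uIcc t 1, HasDerivAt (fun y => (Real.log y - Real.log t)^2/2)
      ((Real.log x - Real.log t) * x⁻¹) x := by
    intro x hx
    rw [Set.uIcc_of_le ht1] at hx
    have hx0 : 0 < x := lt_of_lt_of_le ht hx.1
    have h1 := ((Real.hasDerivAt_log hx0.ne').sub_const (Real.log t)).pow 2
    have h2 : HasDerivAt (fun y => (Real.log y - Real.log t)^2/2)
        (((2:ℕ):ℝ) * (Real.log x - Real.log t) ^ (2 - 1) * x⁻¹ / 2) x := h1.div_const 2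
    convert h2 using 1
    simp only [Nat.cast_ofNat, pow_one]
    ring
  have hint : IntervalIntegrable (fun x => (Real.log x - Real.log t) * x⁻¹) volume t 1 := by
    apply ContinuousOn.intervalIntegrable
    rw [Set.uIcc_of_le ht1]
    have hne : ∀ x ∈ Set.Icc t 1, x ≠ 0 := fun x hx => ne_of_gt (lt_of_lt_of_le ht hx.1)
    apply ContinuousOn.mul
    · exact ((Real.continuousOn_log.mono (fun x hx => hne x hx)).sub continuousOn_const)
    · exact ContinuousOn.inv₀ continuousOn_id hne
  rw [integral_eq_sub_of_hasDerivAt hderiv hint, Real.log_one]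
  ring

end ThetaAux

set_option maxHeartbeats 1000000 in
open ThetaAux in
/-- Theorem 4.4, Case 4: for an integer `i > 1`,
`∫₀¹ ∫₀¹ ∫₀¹ 1/((x₁·x₂·x₃)^i + q) dx₃ dx₂ dx₁ = Θ(q^(−1 + 1/i)·(log q)²)`
as `q → 0⁺`. -/
theorem three_dim_monomial_scaling_equal_gt_one (i : ℕ) (hi : 1 < i) :
    IsThetaAtZero
      (fun q : ℝ => ∫ x₁ in (0:ℝ)..1, ∫ x₂ in (0:ℝ)..1, ∫ x₃ in (0:ℝ)..1,
        1 / ((x₁ * x₂ * x₃) ^ i + q))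
      (fun q : ℝ => q ^ (-1 + 1/(i:ℝ)) * (Real.log q) ^ 2) := by
  have hi2 : (2:ℝ) ≤ (i:ℝ) := by exact_mod_cast hi
  refine ⟨1/(18*(i:ℝ)^2), 3, Real.exp (-(i:ℝ)), by positivity, ?_, Real.exp_pos _, ?_⟩
  · have h1 : (1:ℝ) ≤ (i:ℝ)^2 := by nlinarith
    rw [div_le_iff₀ (by positivity)]
    nlinarith
  intro q hq hq'
  set t := q ^ (1/(i:ℝ)) with htdef
  set s := q ^ (1/(3*(i:ℝ))) with hsdef
  set lq := Real.log q with hlqdef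
  have hlq : lq < -(i:ℝ) := by
    have := Real.log_lt_log hq hq'
    rwa [Real.log_exp] at this
  have hq1 : q < 1 := by
    calc q < Real.exp (-(i:ℝ)) := hq'
      _ < 1 := by
        rw [Real.exp_lt_one_iff]
        linarith
  have ht0 : 0 < t := Real.rpow_pos_of_pos hq _
  have ht1 : t < 1 := Real.rpow_lt_one hq.le hq1 (by positivity)
  have hs0 : 0 < s := Real.rpow_pos_of_pos hq _
  have hs1 : s < 1 := Real.rpow_lt_one hq.le hq1 (by positivity)
  have hlogt : Real.log t = (1/(i:ℝ)) * lq := Real.log_rpow hq _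
  have hlogs : Real.log s = (1/(3*(i:ℝ))) * lq := Real.log_rpow hq _
  have hst : t ≤ s * s := by
    have : s * s = q ^ (1/(3*(i:ℝ)) + 1/(3*(i:ℝ))) := (Real.rpow_add hq _ _).symm
    rw [this, htdef]
    apply Real.rpow_le_rpow_of_exponent_ge hq hq1.le
    rw [← add_div]
    rw [div_le_div_iff₀ (by positivity) (by positivity)]
    nlinarith
  have hR : q ^ (-1 + 1/(i:ℝ)) = t/q := by
    rw [Real.rpow_add hq, htdef, Real.rpow_neg_one, inv_mul_eq_div]
  have hIeq : (∫ x₁ in (0:ℝ)..1, ∫ x₂ in (0:ℝ)..1, ∫ x₃ in (0:ℝ)..1,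
      1 / ((x₁ * x₂ * x₃) ^ i + q)) = ∫ x in (0:ℝ)..1, Phi i q x := by
    refine intervalIntegral.integral_congr fun x₁ hx₁ => ?_
    rw [Set.uIcc_of_le zero_le_one] at hx₁
    show (∫ x₂ in (0:ℝ)..1, ∫ x₃ in (0:ℝ)..1, 1/((x₁*x₂*x₃)^i + q))
        = ∫ x in (0:ℝ)..1, psi i q (x₁ * x)
    refine intervalIntegral.integral_congr fun x₂ hx₂ => ?_
    rw [Set.uIcc_of_le zero_le_one] at hx₂
    show (∫ x₃ in (0:ℝ)..1, 1/((x₁*x₂*x₃)^i + q)) = psi i q (x₁ * x₂)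
    rw [psi_eq_clean i q (x₁*x₂) (mul_nonneg hx₁.1 hx₂.1)]
  have hPhiInt : ∀ c d : ℝ, IntervalIntegrable (Phi i q) volume c d :=
    fun c d => (Phi_cont i q hq).intervalIntegrable c d
  clear_value t s lq
  constructor
  · -- lower bound
    have hsplit : (∫ x in (0:ℝ)..1, Phi i q x) =
        (∫ x in (0:ℝ)..s, Phi i q x) + ∫ x in s..1, Phi i q x :=
      (intervalIntegral.integral_add_adjacent_intervals (hPhiInt 0 s) (hPhiInt s 1)).symm
    have h1 : 0 ≤ ∫ x in (0:ℝ)..s, Phi i q x :=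
      intervalIntegral.integral_nonneg hs0.le fun x _ => Phi_nonneg i q hq x
    have h2 : t/(2*q) * (-Real.log s) * (-Real.log s) ≤ ∫ x in s..1, Phi i q x := by
      have hmono : (∫ x in s..1, (t/(2*q) * (-Real.log s)) * x⁻¹) ≤ ∫ x in s..1, Phi i q x := by
        apply intervalIntegral.integral_mono_on hs1.le _ (hPhiInt s 1)
        · intro x hx
          have hx0 : 0 < x := lt_of_lt_of_le hs0 hx.1
          have hst' : q ^ (1/(i:ℝ)) ≤ s * s := by rw [← htdef]; exact hst
          have := Phi_lower i hi q x s hq hs0 hs1.le hst' hx.1 hx.2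
          rw [← htdef] at this
          have e1 : t/(2*q) * x⁻¹ = t/(2*x*q) := by ring
          calc (t/(2*q) * (-Real.log s)) * x⁻¹
              = (t/(2*q) * x⁻¹) * (-Real.log s) := by ring
            _ = t/(2*x*q) * (-Real.log s) := by rw [e1]
            _ ≤ Phi i q x := this
        · apply ContinuousOn.intervalIntegrable
          rw [Set.uIcc_of_le hs1.le]
          exact continuousOn_const.mul (ContinuousOn.inv₀ continuousOn_id
            (fun x hx => ne_of_gt (lt_of_lt_of_le hs0 hx.1)))
      have hcomp : (∫ x in s..1, (t/(2*q) * (-Real.log s)) * x⁻¹) =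
          t/(2*q) * (-Real.log s) * (-Real.log s) := by
        rw [intervalIntegral.integral_const_mul, integral_inv]
        · rw [Real.log_div one_ne_zero hs0.ne', Real.log_one]
          ring
        · rw [Set.uIcc_of_le hs1.le]
          intro h
          exact absurd h.1 (by linarith)
      linarith [hcomp.le, hcomp.ge]
    have hlow : t/(2*q) * (-Real.log s) * (-Real.log s) ≤
        ∫ x in (0:ℝ)..1, Phi i q x := by
      rw [hsplit]; linarith
    show 1/(18*(i:ℝ)^2) * (q ^ (-1 + 1/(i:ℝ)) * (Real.log q) ^ 2) ≤
      ∫ x₁ in (0:ℝ)..1, ∫ x₂ in (0:ℝ)..1, ∫ x₃ in (0:ℝ)..1, 1 / ((x₁ * x₂ * x₃) ^ i + q)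
    rw [hIeq, hR, ← hlqdef]
    calc 1/(18*(i:ℝ)^2) * (t/q * lq^2) = t/(2*q) * (-Real.log s) * (-Real.log s) := by
          rw [hlogs]
          field_simp
          ring
      _ ≤ _ := hlow
  · -- upper bound
    have hsplit : (∫ x in (0:ℝ)..1, Phi i q x) =
        (∫ x in (0:ℝ)..t, Phi i q x) + ∫ x in t..1, Phi i q x :=
      (intervalIntegral.integral_add_adjacent_intervals (hPhiInt 0 t) (hPhiInt t 1)).symm
    have h1 : (∫ x in (0:ℝ)..t, Phi i q x) ≤ t/q := by
      have : (∫ x in (0:ℝ)..t, Phi i q x) ≤ ∫ _ in (0:ℝ)..t, 1/q :=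
        intervalIntegral.integral_mono_on ht0.le (hPhiInt 0 t) intervalIntegrable_const
          (fun x _ => Phi_le_inv_q i q hq x)
      simpa [div_eq_mul_inv, mul_comm] using this
    have hxne : ∀ x ∈ Set.Icc t 1, x ≠ 0 := fun x hx => ne_of_gt (lt_of_lt_of_le ht0 hx.1)
    have h2 : (∫ x in t..1, Phi i q x) ≤
        t/q * (-Real.log t) + t/q * (Real.log t)^2 := by
      have hgint1 : IntervalIntegrable (fun x : ℝ => t/q * x⁻¹) volume t 1 := by
        apply ContinuousOn.intervalIntegrable
        rw [Set.uIcc_of_le ht1.le]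
        exact continuousOn_const.mul (ContinuousOn.inv₀ continuousOn_id hxne)
      have hgint2 : IntervalIntegrable
          (fun x : ℝ => 2*t/q * ((Real.log x - Real.log t) * x⁻¹)) volume t 1 := by
        apply ContinuousOn.intervalIntegrable
        rw [Set.uIcc_of_le ht1.le]
        apply continuousOn_const.mul
        exact ((Real.continuousOn_log.mono (fun x hx => hxne x hx)).sub
          continuousOn_const).mul (ContinuousOn.inv₀ continuousOn_id hxne)
      have hmono : (∫ x in t..1, Phi i q x) ≤
          ∫ x in t..1, (t/q * x⁻¹ + 2*t/q * ((Real.log x - Real.log t) * x⁻¹)) := by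
        apply intervalIntegral.integral_mono_on ht1.le (hPhiInt t 1) (hgint1.add hgint2)
        intro x hx
        have hx0 : 0 < x := lt_of_lt_of_le ht0 hx.1
        have hx1' : q ^ (1/(i:ℝ)) ≤ x := by rw [← htdef]; exact hx.1
        have := Phi_upper i hi q x hq hx1' hx.2
        rw [← htdef] at this
        have e1 : t/(x*q) = t/q * x⁻¹ := by ring
        have e2 : 2*t/(x*q) = 2*t/q * x⁻¹ := by ring
        calc Phi i q x ≤ t/(x*q) + 2*t/(x*q) * (Real.log x - Real.log t) := this
          _ = t/q * x⁻¹ + 2*t/q * ((Real.log x - Real.log t) * x⁻¹) := by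
              rw [e1, e2]; ring
      have hcomp : (∫ x in t..1, (t/q * x⁻¹ + 2*t/q * ((Real.log x - Real.log t) * x⁻¹))) =
          t/q * (-Real.log t) + t/q * (Real.log t)^2 := by
        rw [intervalIntegral.integral_add hgint1 hgint2,
          intervalIntegral.integral_const_mul, intervalIntegral.integral_const_mul,
          integral_inv, log_sq_integral t ht0 ht1.le]
        · rw [Real.log_div one_ne_zero ht0.ne', Real.log_one]
          ring
        · rw [Set.uIcc_of_le ht1.le]
          intro h
          exact absurd h.1 (by linarith)
      linarith [hcomp.le, hcomp.ge]
    have hup : (∫ x in (0:ℝ)..1, Phi i q x) ≤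
        t/q + t/q * (-Real.log t) + t/q * (Real.log t)^2 := by
      rw [hsplit]; linarith
    show (∫ x₁ in (0:ℝ)..1, ∫ x₂ in (0:ℝ)..1, ∫ x₃ in (0:ℝ)..1,
        1 / ((x₁ * x₂ * x₃) ^ i + q)) ≤ 3 * (q ^ (-1 + 1/(i:ℝ)) * (Real.log q) ^ 2)
    rw [hIeq, hR, ← hlqdef]
    have hL1 : 1 ≤ -Real.log t := by
      rw [hlogt]
      have h := mul_lt_mul_of_pos_left hlq (show (0:ℝ) < 1/(i:ℝ) by positivity)
      have he : (1/(i:ℝ)) * (-(i:ℝ)) = -1 := by field_simp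
      linarith
    have htq : 0 < t/q := div_pos ht0 hq
    have hL2 : (Real.log t)^2 = lq^2/(i:ℝ)^2 := by
      rw [hlogt]
      field_simp
      try ring
    have hfinal : t/q + t/q * (-Real.log t) + t/q * (Real.log t)^2 ≤ 3 * (t/q * lq^2) := by
      have hii : (1:ℝ) ≤ (i:ℝ)^2 := by nlinarith [hi2]
      have hsq : (1:ℝ) ≤ (Real.log t)^2 := by nlinarith [hL1]
      have h3 : -Real.log t ≤ (Real.log t)^2 := by nlinarith [hL1]
      have h4 : (Real.log t)^2 ≤ lq^2 := by
        rw [hL2]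
        rw [div_le_iff₀ (by positivity)]
        nlinarith [sq_nonneg lq]
      nlinarith [htq, hsq, h3, h4]
    linarith [hup, hfinal]
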